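/- Let A be a vector space over a field of characteristic zero with four bilinear products ↘, ↗, ↖, ↙, and define x≻y = x↗y + x↘y, x≺y = x↖y + x↙y, x∨y = x↘y + x↙y, x∧y = x↗y + x↖y. Then: (1) (A,↘,↗,↖,↙) is a quadri-algebra if and only if (A,≻,≺) is a dendriform algebra and (L_↘, R_↗, L_↙, R_↖, A) is a bimodule of (A,≻,≺); (2) (A,↘,↗,↖,↙) is a quadri-algebra if and only if (A,∨,∧) is a dendriform algebra and (L_↘, R_↙, L_↗, R_↖, A) is a bimodule of (A,∨,∧). -/

import Mathlib

open LinearMap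

/-- Dendriform algebra axioms for a pair of bilinear products `succ` (≻) and `prec` (≺). -/
def IsDendriform {K A : Type*} [Field K] [AddCommGroup A] [Module K A]
    (succ prec : A →ₗ[K] A →ₗ[K] A) : Prop :=
  (∀ x y z : A, prec (prec x y) z = prec x (succ y z + prec y z)) ∧
  (∀ x y z : A, prec (succ x y) z = succ x (prec y z)) ∧
  (∀ x y z : A, succ x (succ y z) = succ (succ x y + prec x y) z)

/-- Bimodule of a dendriform algebra `(A, succ, prec)` on `V`
(maps `l_≻ = ls`, `r_≻ = rs`, `l_≺ = lp`, `r_≺ = rp`). -/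
def IsDendBimodule {K A V : Type*} [Field K] [AddCommGroup A] [Module K A]
    [AddCommGroup V] [Module K V] (succ prec : A →ₗ[K] A →ₗ[K] A)
    (ls rs lp rp : A →ₗ[K] V →ₗ[K] V) : Prop :=
  (∀ x y : A, lp (prec x y) = lp x ∘ₗ (lp y + ls y)) ∧
  (∀ x y : A, rp x ∘ₗ lp y = lp y ∘ₗ (rp x + rs x)) ∧
  (∀ x y : A, rp x ∘ₗ rp y = rp (succ y x + prec y x)) ∧
  (∀ x y : A, lp (succ x y) = ls x ∘ₗ lp y) ∧
  (∀ x y : A, rp x ∘ₗ ls y = ls y ∘ₗ rp x) ∧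
  (∀ x y : A, rp x ∘ₗ rs y = rs (prec y x)) ∧
  (∀ x y : A, ls (succ x y + prec x y) = ls x ∘ₗ ls y) ∧
  (∀ x y : A, rs x ∘ₗ (lp y + ls y) = ls y ∘ₗ rs x) ∧
  (∀ x y : A, rs x ∘ₗ (rs y + rp y) = rs (succ y x))

/-- Quadri-algebra axioms for the four products ↘ (`dse`), ↗ (`dne`), ↖ (`dnw`), ↙ (`dsw`). -/
def IsQuadri {K A : Type*} [Field K] [AddCommGroup A] [Module K A]
    (dse dne dnw dsw : A →ₗ[K] A →ₗ[K] A) : Prop :=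
  (∀ x y z : A, dnw (dnw x y) z = dnw x (dse y z + dne y z + dnw y z + dsw y z)) ∧
  (∀ x y z : A, dnw (dne x y) z = dne x (dnw y z + dsw y z)) ∧
  (∀ x y z : A, dne (dne x y + dnw x y) z = dne x (dne y z + dse y z)) ∧
  (∀ x y z : A, dnw (dsw x y) z = dsw x (dne y z + dnw y z)) ∧
  (∀ x y z : A, dnw (dse x y) z = dse x (dnw y z)) ∧
  (∀ x y z : A, dne (dse x y + dsw x y) z = dse x (dne y z)) ∧
  (∀ x y z : A, dsw (dnw x y + dsw x y) z = dsw x (dse y z + dsw y z)) ∧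
  (∀ x y z : A, dsw (dne x y + dse x y) z = dse x (dsw y z)) ∧
  (∀ x y z : A, dse (dse x y + dne x y + dnw x y + dsw x y) z = dse x (dse y z))

/-- Proposition 3.4.3: `(A, ↘, ↗, ↖, ↙)` is a quadri-algebra iff the horizontal sums
`≻ = ↗ + ↘`, `≺ = ↖ + ↙` form a dendriform algebra for which
`(L_↘, R_↗, L_↙, R_↖, A)` is a bimodule; similarly for the vertical sums
`∨ = ↘ + ↙`, `∧ = ↗ + ↖` and `(L_↘, R_↙, L_↗, R_↖, A)`. -/
theorem quadri_iff_dendriform_and_bimodule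
    {K A : Type*} [Field K] [CharZero K] [AddCommGroup A] [Module K A]
    (dse dne dnw dsw : A →ₗ[K] A →ₗ[K] A) :
    (IsQuadri dse dne dnw dsw ↔
      (IsDendriform (dne + dse) (dnw + dsw) ∧
       IsDendBimodule (dne + dse) (dnw + dsw) dse dne.flip dsw dnw.flip)) ∧
    (IsQuadri dse dne dnw dsw ↔
      (IsDendriform (dse + dsw) (dne + dnw) ∧
       IsDendBimodule (dse + dsw) (dne + dnw) dse dsw.flip dne dnw.flip)) := by
  constructor
  · constructor
    · rintro ⟨q1, q2, q3, q4, q5, q6, q7, q8, q9⟩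
      simp only [map_add, LinearMap.add_apply] at q1 q2 q3 q4 q6 q7 q8 q9
      refine ⟨⟨fun x y z => ?_, fun x y z => ?_, fun x y z => ?_⟩,
        fun x y => LinearMap.ext fun z => ?_, fun x y => LinearMap.ext fun z => ?_,
        fun x y => LinearMap.ext fun z => ?_, fun x y => LinearMap.ext fun z => ?_,
        fun x y => LinearMap.ext fun z => ?_, fun x y => LinearMap.ext fun z => ?_,
        fun x y => LinearMap.ext fun z => ?_, fun x y => LinearMap.ext fun z => ?_,
        fun x y => LinearMap.ext fun z => ?_⟩ <;>
        simp only [LinearMap.add_apply, coe_comp, Function.comp_apply, flip_apply, map_add]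
      · linear_combination (norm := abel1) q1 x y z + q4 x y z + q7 x y z
      · linear_combination (norm := abel1) q2 x y z + q5 x y z + q8 x y z
      · linear_combination (norm := abel1) -q3 x y z - q6 x y z - q9 x y z
      · linear_combination (norm := abel1) q7 x y z
      · linear_combination (norm := abel1) q4 y z x
      · linear_combination (norm := abel1) q1 z y x
      · linear_combination (norm := abel1) q8 x y z
      · linear_combination (norm := abel1) q5 y z x
      · linear_combination (norm := abel1) q2 z y x
      · linear_combination (norm := abel1) q9 x y z
      · linear_combination (norm := abel1) q6 y z x
      · linear_combination (norm := abel1) q3 z y x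
    · rintro ⟨⟨d1, d2, d3⟩, b1, b2, b3, b4, b5, b6, b7, b8, b9⟩
      replace b1 := fun x y z => LinearMap.congr_fun (b1 x y) z
      replace b2 := fun x y z => LinearMap.congr_fun (b2 x y) z
      replace b4 := fun x y z => LinearMap.congr_fun (b4 x y) z
      replace b5 := fun x y z => LinearMap.congr_fun (b5 x y) z
      replace b7 := fun x y z => LinearMap.congr_fun (b7 x y) z
      replace b8 := fun x y z => LinearMap.congr_fun (b8 x y) z
      simp only [map_add, LinearMap.add_apply, coe_comp, Function.comp_apply, flip_apply]
        at d1 d2 d3 b1 b2 b4 b5 b7 b8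
      refine ⟨fun x y z => ?_, fun x y z => ?_, fun x y z => ?_, fun x y z => ?_,
        fun x y z => ?_, fun x y z => ?_, fun x y z => ?_, fun x y z => ?_, fun x y z => ?_⟩ <;>
        try simp only [map_add, LinearMap.add_apply]
      · linear_combination (norm := abel1) d1 x y z - b1 x y z - b2 z x y
      · linear_combination (norm := abel1) d2 x y z - b4 x y z - b5 z x y
      · linear_combination (norm := abel1) -d3 x y z - b7 x y z - b8 z x y
      · linear_combination (norm := abel1) b2 z x y
      · linear_combination (norm := abel1) b5 z x y
      · linear_combination (norm := abel1) b8 z x y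
      · linear_combination (norm := abel1) b1 x y z
      · linear_combination (norm := abel1) b4 x y z
      · linear_combination (norm := abel1) b7 x y z
  · constructor
    · rintro ⟨q1, q2, q3, q4, q5, q6, q7, q8, q9⟩
      simp only [map_add, LinearMap.add_apply] at q1 q2 q3 q4 q6 q7 q8 q9
      refine ⟨⟨fun x y z => ?_, fun x y z => ?_, fun x y z => ?_⟩,
        fun x y => LinearMap.ext fun z => ?_, fun x y => LinearMap.ext fun z => ?_,
        fun x y => LinearMap.ext fun z => ?_, fun x y => LinearMap.ext fun z => ?_,
        fun x y => LinearMap.ext fun z => ?_, fun x y => LinearMap.ext fun z => ?_,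
        fun x y => LinearMap.ext fun z => ?_, fun x y => LinearMap.ext fun z => ?_,
        fun x y => LinearMap.ext fun z => ?_⟩ <;>
        simp only [LinearMap.add_apply, coe_comp, Function.comp_apply, flip_apply, map_add]
      · linear_combination (norm := abel1) q1 x y z + q2 x y z + q3 x y z
      · linear_combination (norm := abel1) q4 x y z + q5 x y z + q6 x y z
      · linear_combination (norm := abel1) -q7 x y z - q8 x y z - q9 x y z
      · linear_combination (norm := abel1) q3 x y z
      · linear_combination (norm := abel1) q2 y z x
      · linear_combination (norm := abel1) q1 z y x
      · linear_combination (norm := abel1) q6 x y z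
      · linear_combination (norm := abel1) q5 y z x
      · linear_combination (norm := abel1) q4 z y x
      · linear_combination (norm := abel1) q9 x y z
      · linear_combination (norm := abel1) q8 y z x
      · linear_combination (norm := abel1) q7 z y x
    · rintro ⟨⟨d1, d2, d3⟩, b1, b2, b3, b4, b5, b6, b7, b8, b9⟩
      replace b1 := fun x y z => LinearMap.congr_fun (b1 x y) z
      replace b2 := fun x y z => LinearMap.congr_fun (b2 x y) z
      replace b4 := fun x y z => LinearMap.congr_fun (b4 x y) z
      replace b5 := fun x y z => LinearMap.congr_fun (b5 x y) z
      replace b7 := fun x y z => LinearMap.congr_fun (b7 x y) z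
      replace b8 := fun x y z => LinearMap.congr_fun (b8 x y) z
      simp only [map_add, LinearMap.add_apply, coe_comp, Function.comp_apply, flip_apply]
        at d1 d2 d3 b1 b2 b4 b5 b7 b8
      refine ⟨fun x y z => ?_, fun x y z => ?_, fun x y z => ?_, fun x y z => ?_,
        fun x y z => ?_, fun x y z => ?_, fun x y z => ?_, fun x y z => ?_, fun x y z => ?_⟩ <;>
        try simp only [map_add, LinearMap.add_apply]
      · linear_combination (norm := abel1) d1 x y z - b1 x y z - b2 z x y
      · linear_combination (norm := abel1) b2 z x y
      · linear_combination (norm := abel1) b1 x y z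
      · linear_combination (norm := abel1) d2 x y z - b4 x y z - b5 z x y
      · linear_combination (norm := abel1) b5 z x y
      · linear_combination (norm := abel1) b4 x y z
      · linear_combination (norm := abel1) -d3 x y z - b7 x y z - b8 z x y
      · linear_combination (norm := abel1) b8 z x y
      · linear_combination (norm := abel1) b7 x y z
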